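/- In an NFA cover automaton A for a finite language L with maximal word length l, if p ∼_A q (states p and q are similar) and level(p) ≤ level(q) ≤ l, then strongly merging q into p (redirecting all transitions entering q to enter p instead, and deleting q and its outgoing transitions) yields an NFA A' that is still a cover automaton for L. -/

import Mathlib

/-- `A` is an NFA cover automaton for `L` with length bound `l`. -/
def IsCoverN {α σ : Type*} (A : NFA α σ) (L : Language α) (l : ℕ) : Prop :=
  ∀ w : List α, w.length ≤ l → (w ∈ A.accepts ↔ w ∈ L)

/-- The level of a state: the length of a shortest word reaching it
(`⊤` if it is unreachable). -/
noncomputable def nfaLevel {α σ : Type*} (A : NFA α σ) (s : σ) : ℕ∞ :=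
  ⨅ w ∈ {w : List α | s ∈ A.eval w}, (w.length : ℕ∞)

/-- Acceptance of a word starting from the single state `s`. -/
def AccFrom {α σ : Type*} (A : NFA α σ) (s : σ) (w : List α) : Prop :=
  ∃ f ∈ A.evalFrom {s} w, f ∈ A.accept

/-- Similarity of states `p ∼_A q` in a cover automaton with length bound `l`:
acceptance from `p` and from `q` agree on all words of length at most
`l - max(level(p), level(q))`. -/
def StateSim {α σ : Type*} (A : NFA α σ) (l : ℕ) (p q : σ) : Prop :=
  ∀ w : List α,
    (w.length : ℕ∞) ≤ (l : ℕ∞) - max (nfaLevel A p) (nfaLevel A q) →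
    (AccFrom A p w ↔ AccFrom A q w)

/-- Strong merge of state `q` into state `p`: transitions entering `q` are
redirected to `p`, and `q` (with its outgoing transitions) is deleted. -/
def strongMerge {α σ : Type*} (A : NFA α σ) (p q : σ) : NFA α {s : σ // s ≠ q} where
  step := fun s a => {t | (t : σ) ∈ A.step s.1 a ∨ ((t : σ) = p ∧ q ∈ A.step s.1 a)}
  start := {s | (s : σ) ∈ A.start ∨ ((s : σ) = p ∧ q ∈ A.start)}
  accept := {s | (s : σ) ∈ A.accept}

/-- Weak merge of state `q` into state `p`: `q` is collapsed onto `p`,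
consolidating both its incoming and its outgoing transitions. -/
def weakMerge {α σ : Type*} [DecidableEq σ] (A : NFA α σ) (p q : σ) :
    NFA α {s : σ // s ≠ q} where
  step := fun s a =>
    if (s : σ) = p then
      {t | (t : σ) ∈ A.step p a ∨ (t : σ) ∈ A.step q a ∨
        ((t : σ) = p ∧ (q ∈ A.step p a ∨ q ∈ A.step q a))}
    else
      {t | (t : σ) ∈ A.step s.1 a ∨ ((t : σ) = p ∧ q ∈ A.step s.1 a)}
  start := {s | (s : σ) ∈ A.start ∨ ((s : σ) = p ∧ q ∈ A.start)}
  accept := {s | (s : σ) ∈ A.accept}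

namespace CoverAux


variable {α σ τ : Type*}

theorem mem_evalFrom_iff (A : NFA α σ) (S : Set σ) (w : List α) (f : σ) :
    f ∈ A.evalFrom S w ↔ ∃ s ∈ S, f ∈ A.evalFrom {s} w := by
  induction w generalizing S with
  | nil => simp [NFA.evalFrom]
  | cons a w ih =>
    have h1 : A.evalFrom S (a :: w) = A.evalFrom (A.stepSet S a) w := rfl
    rw [h1, ih]
    constructor
    · rintro ⟨t, ht, hf⟩
      rw [NFA.mem_stepSet] at ht
      obtain ⟨s, hs, hts⟩ := ht
      refine ⟨s, hs, ?_⟩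
      have h2 : A.evalFrom {s} (a :: w) = A.evalFrom (A.stepSet {s} a) w := rfl
      rw [h2, ih]
      exact ⟨t, by rw [NFA.mem_stepSet]; exact ⟨s, rfl, hts⟩, hf⟩
    · rintro ⟨s, hs, hf⟩
      have h2 : A.evalFrom {s} (a :: w) = A.evalFrom (A.stepSet {s} a) w := rfl
      rw [h2, ih] at hf
      obtain ⟨t, ht, hf⟩ := hf
      rw [NFA.mem_stepSet] at ht
      obtain ⟨s', hs', hts⟩ := ht
      cases hs'
      exact ⟨t, by rw [NFA.mem_stepSet]; exact ⟨s, hs, hts⟩, hf⟩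

theorem accFrom_nil (A : NFA α σ) (s : σ) : AccFrom A s [] ↔ s ∈ A.accept := by
  simp [AccFrom, NFA.evalFrom]

theorem accFrom_cons (A : NFA α σ) (s : σ) (a : α) (v : List α) :
    AccFrom A s (a :: v) ↔ ∃ t ∈ A.step s a, AccFrom A t v := by
  unfold AccFrom
  have h1 : A.evalFrom {s} (a :: v) = A.evalFrom (A.stepSet {s} a) v := rfl
  constructor
  · rintro ⟨f, hf, hacc⟩
    rw [h1, mem_evalFrom_iff] at hf
    obtain ⟨t, ht, hf⟩ := hf
    rw [NFA.mem_stepSet] at ht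
    obtain ⟨s', hs', hts⟩ := ht
    cases hs'
    exact ⟨t, hts, f, hf, hacc⟩
  · rintro ⟨t, hts, f, hf, hacc⟩
    refine ⟨f, ?_, hacc⟩
    rw [h1, mem_evalFrom_iff]
    exact ⟨t, by rw [NFA.mem_stepSet]; exact ⟨s, rfl, hts⟩, hf⟩

theorem mem_accepts_iff (A : NFA α σ) (w : List α) :
    w ∈ A.accepts ↔ ∃ s ∈ A.start, AccFrom A s w := by
  rw [NFA.mem_accepts]
  constructor
  · rintro ⟨f, hacc, hf⟩
    rw [mem_evalFrom_iff] at hf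
    obtain ⟨s, hs, hf⟩ := hf
    exact ⟨s, hs, f, hf, hacc⟩
  · rintro ⟨s, hs, f, hf, hacc⟩
    exact ⟨f, hacc, (mem_evalFrom_iff A _ w f).2 ⟨s, hs, hf⟩⟩

theorem level_le (A : NFA α σ) (s : σ) (u : List α) (hu : s ∈ A.eval u) :
    nfaLevel A s ≤ (u.length : ℕ∞) :=
  iInf₂_le u hu

theorem suffix_budget {l u w' : ℕ} {x : ℕ∞} (h : u + w' ≤ l) (hx : x ≤ (u : ℕ∞)) :
    (w' : ℕ∞) ≤ (l : ℕ∞) - x := by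
  calc (w' : ℕ∞) ≤ (l : ℕ∞) - (u : ℕ∞) := by
        have h2 : w' ≤ l - u := by omega
        calc (w' : ℕ∞) ≤ ((l - u : ℕ) : ℕ∞) := by exact_mod_cast h2
          _ = (l : ℕ∞) - (u : ℕ∞) := by
            exact_mod_cast ENat.coe_sub l u
    _ ≤ (l : ℕ∞) - x := tsub_le_tsub_left hx _



theorem lemmaC {α σ : Type*} (A : NFA α σ) (l : ℕ) (p q : σ) (hpq : p ≠ q)
    (hsim : StateSim A l p q) (hlev : nfaLevel A p ≤ nfaLevel A q) :
    ∀ (v : List α) (s : σ) (hs : s ≠ q),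
      AccFrom A s v →
      (∀ u w', v = u ++ w' → q ∈ A.evalFrom {s} u →
        (w'.length : ℕ∞) ≤ (l : ℕ∞) - nfaLevel A q) →
      AccFrom (strongMerge A p q) ⟨s, hs⟩ v := by
  have hmax : max (nfaLevel A p) (nfaLevel A q) = nfaLevel A q := max_eq_right hlev
  intro v
  induction v with
  | nil =>
    intro s hs hacc _
    rw [accFrom_nil] at hacc ⊢
    exact hacc
  | cons a v ih =>
    intro s hs hacc hbud
    rw [accFrom_cons] at hacc
    obtain ⟨t, hts, hacc⟩ := hacc
    by_cases htq : t = q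
    · rw [htq] at hts hacc
      -- q ∈ A.step s a, AccFrom A q v
      have hqe : q ∈ A.evalFrom {s} [a] := by
        rw [NFA.evalFrom_singleton, NFA.mem_stepSet]
        exact ⟨s, rfl, hts⟩
      have hlen : (v.length : ℕ∞) ≤ (l : ℕ∞) - nfaLevel A q :=
        hbud [a] v rfl hqe
      have haccp : AccFrom A p v := (hsim v (by rw [hmax]; exact hlen)).2 hacc
      have hrec : AccFrom (strongMerge A p q) ⟨p, hpq⟩ v := by
        apply ih p hpq haccp
        intro u w' huw _
        calc (w'.length : ℕ∞) ≤ (v.length : ℕ∞) := by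
              exact_mod_cast huw ▸ (by simp : w'.length ≤ (u ++ w').length)
          _ ≤ (l : ℕ∞) - nfaLevel A q := hlen
      rw [accFrom_cons]
      exact ⟨⟨p, hpq⟩, Or.inr ⟨rfl, hts⟩, hrec⟩
    · have hrec : AccFrom (strongMerge A p q) ⟨t, htq⟩ v := by
        apply ih t htq hacc
        intro u w' huw hqu
        apply hbud (a :: u) w' (by rw [huw]; rfl)
        have h1 : A.evalFrom {s} (a :: u) = A.evalFrom (A.stepSet {s} a) u := rfl
        rw [h1, mem_evalFrom_iff]
        refine ⟨t, ?_, hqu⟩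
        rw [NFA.mem_stepSet]
        exact ⟨s, rfl, hts⟩
      rw [accFrom_cons]
      exact ⟨⟨t, htq⟩, Or.inl hts, hrec⟩

theorem lemmaE {α σ : Type*} (A : NFA α σ) (l : ℕ) (p q : σ) (hpq : p ≠ q)
    (hsim : StateSim A l p q) (hlev : nfaLevel A p ≤ nfaLevel A q) :
    ∀ (v : List α) (s : σ) (hs : s ≠ q),
      AccFrom (strongMerge A p q) ⟨s, hs⟩ v →
      (∀ u w', v = u ++ w' → q ∈ A.evalFrom {s} u →
        (w'.length : ℕ∞) ≤ (l : ℕ∞) - nfaLevel A q) →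
      AccFrom A s v := by
  have hmax : max (nfaLevel A p) (nfaLevel A q) = nfaLevel A q := max_eq_right hlev
  intro v
  induction v with
  | nil =>
    intro s hs hacc _
    rw [accFrom_nil] at hacc ⊢
    exact hacc
  | cons a v ih =>
    intro s hs hacc hbud
    rw [accFrom_cons] at hacc
    obtain ⟨t, hts, hacc⟩ := hacc
    rcases hts with hts | ⟨htp, hqs⟩
    · -- genuine transition t.1 ∈ A.step s a
      have hrec : AccFrom A t.1 v := by
        apply ih t.1 t.2 (by convert hacc) ?_
        intro u w' huw hqu
        apply hbud (a :: u) w' (by rw [huw]; rfl)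
        have h1 : A.evalFrom {s} (a :: u) = A.evalFrom (A.stepSet {s} a) u := rfl
        rw [h1, mem_evalFrom_iff]
        refine ⟨t.1, ?_, hqu⟩
        rw [NFA.mem_stepSet]
        exact ⟨s, rfl, hts⟩
      rw [accFrom_cons]
      exact ⟨t.1, hts, hrec⟩
    · -- redirected transition: t.1 = p, q ∈ A.step s a
      have hqe : q ∈ A.evalFrom {s} [a] := by
        rw [NFA.evalFrom_singleton, NFA.mem_stepSet]
        exact ⟨s, rfl, hqs⟩
      have hlen : (v.length : ℕ∞) ≤ (l : ℕ∞) - nfaLevel A q :=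
        hbud [a] v rfl hqe
      have haccp : AccFrom A p v := by
        apply ih p hpq ?_ ?_
        · have : t = ⟨p, hpq⟩ := Subtype.ext htp
          rwa [this] at hacc
        · intro u w' huw _
          calc (w'.length : ℕ∞) ≤ (v.length : ℕ∞) := by
                exact_mod_cast huw ▸ (by simp : w'.length ≤ (u ++ w').length)
            _ ≤ (l : ℕ∞) - nfaLevel A q := hlen
      have haccq : AccFrom A q v := (hsim v (by rw [hmax]; exact hlen)).1 haccp
      rw [accFrom_cons]
      exact ⟨q, hqs, haccq⟩

end CoverAux

/-- if `p ∼_A q` in an NFA cover automaton `A` for `L` and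
`level(p) ≤ level(q) ≤ l`, then strongly merging `q` into `p` yields an NFA
that is still a cover automaton for `L`. -/
theorem strongMerge_is_cover {α σ : Type*} (A : NFA α σ) (L : Language α) (l : ℕ)
    (hA : IsCoverN A L l) (p q : σ) (hpq : p ≠ q)
    (hsim : StateSim A l p q)
    (hlev : nfaLevel A p ≤ nfaLevel A q)
    (hql : nfaLevel A q ≤ (l : ℕ∞)) :
    IsCoverN (strongMerge A p q) L l := by
  intro w hw
  rw [CoverAux.mem_accepts_iff]
  have hmax : max (nfaLevel A p) (nfaLevel A q) = nfaLevel A q := max_eq_right hlev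
  constructor
  · rintro ⟨s', hs', hacc⟩
    rcases hs' with hs | ⟨hsp, hqst⟩
    · -- s'.1 ∈ A.start
      have : AccFrom A s'.1 w := by
        apply CoverAux.lemmaE A l p q hpq hsim hlev w s'.1 s'.2 (by convert hacc) ?_
        intro u w' huw hqu
        have hq : nfaLevel A q ≤ (u.length : ℕ∞) := by
          apply CoverAux.level_le
          rw [NFA.eval, CoverAux.mem_evalFrom_iff]
          exact ⟨s'.1, hs, hqu⟩
        apply CoverAux.suffix_budget ?_ hq
        calc u.length + w'.length = w.length := by rw [huw]; simp
          _ ≤ l := hw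
      have : w ∈ A.accepts := (CoverAux.mem_accepts_iff A w).2 ⟨s'.1, hs, this⟩
      exact (hA w hw).1 this
    · -- q ∈ A.start
      have hq0 : nfaLevel A q = 0 := by
        apply le_antisymm ?_ zero_le
        have : q ∈ A.eval [] := hqst
        simpa using CoverAux.level_le A q [] this
      have hwl : (w.length : ℕ∞) ≤ (l : ℕ∞) - nfaLevel A q := by
        rw [hq0, tsub_zero]
        exact_mod_cast hw
      have haccp : AccFrom A p w := by
        apply CoverAux.lemmaE A l p q hpq hsim hlev w p hpq ?_ ?_
        · have : s' = ⟨p, hpq⟩ := Subtype.ext hsp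
          rwa [this] at hacc
        · intro u w' huw _
          calc (w'.length : ℕ∞) ≤ (w.length : ℕ∞) := by
                exact_mod_cast huw ▸ (by simp : w'.length ≤ (u ++ w').length)
            _ ≤ (l : ℕ∞) - nfaLevel A q := hwl
      have haccq : AccFrom A q w := (hsim w (by rw [hmax]; exact hwl)).1 haccp
      have : w ∈ A.accepts := (CoverAux.mem_accepts_iff A w).2 ⟨q, hqst, haccq⟩
      exact (hA w hw).1 this
  · intro hL
    have : w ∈ A.accepts := (hA w hw).2 hL
    rw [CoverAux.mem_accepts_iff] at this
    obtain ⟨s, hs, hacc⟩ := this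
    by_cases hsq : s = q
    · rw [hsq] at hs hacc
      have hq0 : nfaLevel A q = 0 := by
        apply le_antisymm ?_ zero_le
        simpa using CoverAux.level_le A q [] hs
      have hwl : (w.length : ℕ∞) ≤ (l : ℕ∞) - nfaLevel A q := by
        rw [hq0, tsub_zero]
        exact_mod_cast hw
      have haccp : AccFrom A p w := (hsim w (by rw [hmax]; exact hwl)).2 hacc
      refine ⟨⟨p, hpq⟩, Or.inr ⟨rfl, hs⟩, ?_⟩
      apply CoverAux.lemmaC A l p q hpq hsim hlev w p hpq haccp
      intro u w' huw _
      calc (w'.length : ℕ∞) ≤ (w.length : ℕ∞) := by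
            exact_mod_cast huw ▸ (by simp : w'.length ≤ (u ++ w').length)
        _ ≤ (l : ℕ∞) - nfaLevel A q := hwl
    · refine ⟨⟨s, hsq⟩, Or.inl hs, ?_⟩
      apply CoverAux.lemmaC A l p q hpq hsim hlev w s hsq hacc
      intro u w' huw hqu
      have hq : nfaLevel A q ≤ (u.length : ℕ∞) := by
        apply CoverAux.level_le
        rw [NFA.eval, CoverAux.mem_evalFrom_iff]
        exact ⟨s, hs, hqu⟩
      apply CoverAux.suffix_budget ?_ hq
      calc u.length + w'.length = w.length := by rw [huw]; simp
        _ ≤ l := hw
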